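/- For every simple digraph Γ, th(Γ) = th(Γᵀ), where Γᵀ is the transpose of Γ obtained by reversing all arcs. -/
import Mathlib


open Set

/-- One time step of standard zero forcing on a digraph with arc relation `A`:
every blue vertex having a unique white out-neighbor forces it blue. -/
def dstep {V : Type*} (A : V → V → Prop) (S : Set V) : Set V :=
  S ∪ {w | ∃ u ∈ S, A u w ∧ ∀ x, A u x → x ∉ S → x = w}

/-- `B` is a zero forcing set of the digraph with arc relation `A`. -/
def IsZFS {V : Type*} (A : V → V → Prop) (B : Set V) : Prop :=
  ∃ t, (dstep A)^[t] B = Set.univ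

/-- Propagation time of `B` in the digraph with arc relation `A`. -/
noncomputable def dpt {V : Type*} (A : V → V → Prop) (B : Set V) : ℕ :=
  sInf {t | (dstep A)^[t] B = Set.univ}

/-- The throttling number of the digraph with arc relation `A`. -/
noncomputable def dth {V : Type*} (A : V → V → Prop) : ℕ :=
  sInf {k | ∃ B : Set V, IsZFS A B ∧ k = B.ncard + dpt A B}

lemma subset_dstep {V : Type*} (A : V → V → Prop) (S : Set V) : S ⊆ dstep A S :=
  Set.subset_union_left

/-- Reversal of a zero forcing process: from a set forcing `univ` in `t` steps one
gets a set of no larger size forcing `univ` in `t` steps on the transpose. -/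
lemma key_reversal {V : Type*} [Fintype V] (A : V → V → Prop) (B : Set V) (t : ℕ)
    (h : (dstep A)^[t] B = Set.univ) :
    ∃ B' : Set V, (dstep (flip A))^[t] B' = Set.univ ∧ B'.ncard ≤ B.ncard := by
  classical
  set S : ℕ → Set V := fun i => (dstep A)^[i] B with hSdef
  have hstep : ∀ i, S (i + 1) = dstep A (S i) := fun i => Function.iterate_succ_apply' _ _ _
  have hmono : Monotone S := monotone_nat_of_le_succ fun i => by
    rw [hstep]; exact subset_dstep _ _
  have hSt : S t = Set.univ := h
  have hex : ∀ v : V, ∃ i, v ∈ S i := fun v => ⟨t, by rw [hSt]; trivial⟩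
  set tm : V → ℕ := fun v => Nat.find (hex v) with htmdef
  have htm1 : ∀ v, v ∈ S (tm v) := fun v => Nat.find_spec (hex v)
  have htm2 : ∀ v i, i < tm v → v ∉ S i := fun v i hi => Nat.find_min (hex v) hi
  have htm3 : ∀ v, tm v ≤ t := fun v => Nat.find_le (by rw [hSt]; trivial)
  have hS0 : S 0 = B := rfl
  have htm_pos : ∀ v, v ∉ B → 1 ≤ tm v := by
    intro v hv
    by_contra hc
    have h0 : tm v = 0 := by omega
    have := htm1 v
    rw [h0, hS0] at this
    exact hv this
  have hforce : ∀ v, v ∉ B → ∃ u, u ∈ S (tm v - 1) ∧ A u v ∧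
      ∀ x, A u x → x ∉ S (tm v - 1) → x = v := by
    intro v hv
    have hpos := htm_pos v hv
    have h1 : v ∈ S (tm v) := htm1 v
    have h2 : v ∉ S (tm v - 1) := htm2 v _ (by omega)
    have heq : tm v - 1 + 1 = tm v := by omega
    rw [← heq, hstep] at h1
    rcases h1 with h1 | h1
    · exact absurd h1 h2
    · obtain ⟨u, hu, hAu, huniq⟩ := h1
      exact ⟨u, hu, hAu, huniq⟩
  choose! p hp1 hp2 hp3 using hforce
  set Term : Set V := {u | ∀ v, v ∉ B → p v ≠ u} with hTermdef
  -- cardinality: p is injective on Bᶜ and maps into Termᶜ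
  have hinj : Set.InjOn p Bᶜ := by
    intro a ha b hb hpe
    by_contra hne
    have ha' : a ∉ B := ha
    have hb' : b ∉ B := hb
    have hA_ab : A (p b) a := hpe ▸ hp2 a ha'
    have hA_ba : A (p a) b := hpe ▸ hp2 b hb'
    have h1 : a ∈ S (tm b - 1) := by
      by_contra hc
      exact hne (hp3 b hb' a hA_ab hc)
    have h2 : b ∈ S (tm a - 1) := by
      by_contra hc
      exact (hne (hp3 a ha' b hA_ba hc).symm)
    have hle1 : ¬ (tm b - 1 < tm a) := fun hlt => htm2 a _ hlt h1
    have hle2 : ¬ (tm a - 1 < tm b) := fun hlt => htm2 b _ hlt h2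
    have := htm_pos a ha'
    have := htm_pos b hb'
    omega
  have hcard : Term.ncard ≤ B.ncard := by
    have hsub : p '' Bᶜ ⊆ Termᶜ := by
      rintro _ ⟨v, hv, rfl⟩
      intro hT
      exact hT v hv rfl
    have h1 : (Bᶜ : Set V).ncard ≤ (Termᶜ : Set V).ncard := by
      rw [← Set.ncard_image_of_injOn hinj]
      exact Set.ncard_le_ncard hsub (Set.toFinite _)
    have e1 := Set.ncard_add_ncard_compl B
    have e2 := Set.ncard_add_ncard_compl Term
    omega
  -- the reversed process
  set C : ℕ → Set V := fun j => (dstep (flip A))^[j] Term with hCdef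
  have hCstep : ∀ j, C (j + 1) = dstep (flip A) (C j) :=
    fun j => Function.iterate_succ_apply' _ _ _
  have Tclaim : ∀ j, ∀ u : V, (∀ v, v ∉ B → p v = u → t - j < tm v) → u ∈ C j := by
    intro j
    induction j with
    | zero =>
      intro u hu
      show u ∈ Term
      intro v hv hpv
      have h1 := hu v hv hpv
      have h2 := htm3 v
      omega
    | succ j ih =>
      intro u hu
      rw [hCstep]
      by_cases hu' : ∀ v, v ∉ B → p v = u → t - j < tm v
      · exact subset_dstep _ _ (ih u hu')
      · push_neg at hu'
        obtain ⟨v, hvB, hpv, hvle⟩ := hu'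
        have hgt := hu v hvB hpv
        have h1 := htm_pos v hvB
        have htmv : tm v = t - j := by omega
        have hjt : j < t := by omega
        have hv_not : v ∉ S (tm v - 1) := htm2 v _ (by omega)
        right
        refine ⟨v, ?_, ?_, ?_⟩
        · -- v ∈ C j
          apply ih v
          intro v' hv' hpv'
          have hv_in : v ∈ S (tm v' - 1) := hpv' ▸ hp1 v' hv'
          by_contra hle
          push_neg at hle
          have h2 := htm_pos v' hv'
          have hsub : tm v' - 1 ≤ tm v - 1 := by omega
          exact hv_not (hmono hsub hv_in)
        · -- flip A v u
          show A u v
          exact hpv ▸ hp2 v hvB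
        · -- uniqueness in the reversed step
          intro x hxv hxC
          by_contra hxu
          apply hxC
          apply ih x
          intro y hy hpy
          by_contra hle
          push_neg at hle
          have h2 := htm_pos y hy
          have hAxv : A (p y) v := hpy ▸ (hxv : A x v)
          have hvnot' : v ∉ S (tm y - 1) := fun hmem =>
            hv_not (hmono (by omega : tm y - 1 ≤ tm v - 1) hmem)
          have hveq : v = y := hp3 y hy v hAxv hvnot'
          apply hxu
          rw [← hpy, ← hveq, hpv]
  have hfin : C t = Set.univ := by
    rw [Set.eq_univ_iff_forall]
    intro u
    apply Tclaim t
    intro v hv _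
    have := htm_pos v hv
    omega
  exact ⟨Term, hfin, hcard⟩

lemma dth_flip_le {V : Type*} [Fintype V] (A : V → V → Prop) : dth (flip A) ≤ dth A := by
  classical
  have hne : {k | ∃ B : Set V, IsZFS A B ∧ k = B.ncard + dpt A B}.Nonempty :=
    ⟨(Set.univ : Set V).ncard + dpt A Set.univ, Set.univ, ⟨0, by simp⟩, rfl⟩
  obtain ⟨B, hZ, hk⟩ := Nat.sInf_mem hne
  obtain ⟨t0, ht0⟩ := hZ
  have hdpt : (dstep A)^[dpt A B] B = Set.univ :=
    Nat.sInf_mem (⟨t0, ht0⟩ : {t | (dstep A)^[t] B = Set.univ}.Nonempty)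
  obtain ⟨B', hB', hcard⟩ := key_reversal A B (dpt A B) hdpt
  have hZ' : IsZFS (flip A) B' := ⟨_, hB'⟩
  have hle : dpt (flip A) B' ≤ dpt A B := Nat.sInf_le hB'
  calc dth (flip A) ≤ B'.ncard + dpt (flip A) B' := Nat.sInf_le ⟨B', hZ', rfl⟩
    _ ≤ B.ncard + dpt A B := add_le_add hcard hle
    _ = dth A := hk.symm

/-- The throttling number of a simple digraph equals that of its transpose. -/
theorem stmt2 {V : Type*} [Fintype V] (A : V → V → Prop) (hirr : Irreflexive A) :
    dth A = dth (flip A) := by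
  have h1 := dth_flip_le A
  have h2 := dth_flip_le (flip A)
  have hff : flip (flip A) = A := rfl
  rw [hff] at h2
  exact le_antisymm h2 h1
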